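/- Let d : {1,…,l}² → ℝ be nonnegative, and let v = (v¹|…|v^l) ∈ ℝ^{d×l} satisfy Σ_{k=1}^l v^k = 0 and ‖v^i − v^j‖ ≤ d(i,j) for all i ≠ j. Then the Frobenius norm of v is bounded by ‖v‖ ≤ min_{1 ≤ i ≤ l} (Σ_{j=1}^l d(i,j)²)^{1/2}. -/

import Mathlib

/- STATEMENT 5: If `d` is nonnegative and the columns `v 1, …, v l ∈ ℝ^m` sum to
zero with `‖v i - v j‖ ≤ d i j` for `i ≠ j`, then the Frobenius norm of `v` is
at most `min_i (∑ j, d i j ^ 2)^{1/2}`. -/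
theorem stmt5 (l m : ℕ) (hl : 0 < l) (hm : 0 < m)
    (d : Fin l → Fin l → ℝ) (hd : ∀ i j, 0 ≤ d i j)
    (v : Fin l → EuclideanSpace ℝ (Fin m))
    (hsum : (∑ k, v k) = 0)
    (hbnd : ∀ i j, i ≠ j → ‖v i - v j‖ ≤ d i j) :
    Real.sqrt (∑ k, ‖v k‖ ^ 2) ≤
      Finset.univ.inf' ⟨⟨0, hl⟩, Finset.mem_univ _⟩
        (fun i => Real.sqrt (∑ j, d i j ^ 2)) := by
  apply Finset.le_inf'
  intro i _
  apply Real.sqrt_le_sqrt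
  have key : (∑ k, ‖v k‖ ^ 2) ≤ ∑ j, ‖v i - v j‖ ^ 2 := by
    have expand : ∀ j, ‖v i - v j‖ ^ 2
        = ‖v i‖ ^ 2 - 2 * (inner ℝ (v i) (v j) : ℝ) + ‖v j‖ ^ 2 := fun j => by
      rw [norm_sub_sq_real]
    have : ∑ j, ‖v i - v j‖ ^ 2
        = (l : ℝ) * ‖v i‖ ^ 2 - 2 * (inner ℝ (v i) (∑ j, v j) : ℝ) + ∑ j, ‖v j‖ ^ 2 := by
      simp only [expand, Finset.sum_add_distrib, Finset.sum_sub_distrib,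
        Finset.sum_const, Finset.card_univ, Fintype.card_fin, nsmul_eq_mul,
        ← Finset.mul_sum, inner_sum]
    rw [this, hsum, inner_zero_right]
    have hl1 : (1:ℝ) ≤ l := Nat.one_le_cast.mpr hl
    nlinarith [sq_nonneg ‖v i‖]
  refine key.trans (Finset.sum_le_sum fun j _ => ?_)
  by_cases h : i = j
  · subst h
    simp [sq_nonneg, hd]
  · have := hbnd i j h
    nlinarith [norm_nonneg (v i - v j), hd i j]
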